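/- If (X, X₀, R) is a 2-precontact space, then X is a compact topological space. -/

import Mathlib

open TopologicalSpace

/-- The relation `C#` associated to a precontact relation `C`. -/
def CSharp {B : Type*} [BooleanAlgebra B] (C : B → B → Prop) (a b : B) : Prop :=
  C a b ∨ C b a ∨ a ⊓ b ≠ ⊥

/-- A clan of a precontact algebra `(B,C)`. -/
def IsClan {B : Type*} [BooleanAlgebra B] (C : B → B → Prop) (Γ : Set B) : Prop :=
  Γ.Nonempty ∧ ⊥ ∉ Γ ∧ (∀ a ∈ Γ, ∀ b : B, a ≤ b → b ∈ Γ) ∧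
    (∀ a b : B, a ⊔ b ∈ Γ → a ∈ Γ ∨ b ∈ Γ) ∧
    (∀ a ∈ Γ, ∀ b ∈ Γ, CSharp C a b)

/-- For a clopen subset `A` of the subspace `X₀`, its closure `cl_X A` in the ambient space. -/
def embCl {X : Type*} [TopologicalSpace X] (X₀ : Set X) (A : Clopens ↥X₀) : Set X :=
  closure (Subtype.val '' (A : Set ↥X₀))

/-- The precontact relation `C_R` on `CO(X₀)` induced by an adjacency relation `R` on `X₀`. -/
def clopCR {X : Type*} [TopologicalSpace X] {X₀ : Set X}
    (R : ↥X₀ → ↥X₀ → Prop) (A B : Clopens ↥X₀) : Prop :=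
  ∃ x ∈ (A : Set ↥X₀), ∃ y ∈ (B : Set ↥X₀), R x y

/-- A 2-precontact space `(X, X₀, R)`. -/
structure TwoPrecontact (X : Type*) [TopologicalSpace X] (X₀ : Set X)
    (R : ↥X₀ → ↥X₀ → Prop) : Prop where
  /-- (PCS1): `X₀` is dense in `X` -/
  dense : Dense X₀
  /-- (PCS1): `X` is a `T₀`-space -/
  t0 : T0Space X
  /-- (PCS2): `X₀` is compact -/
  compact₀ : CompactSpace ↥X₀
  /-- (PCS2): `X₀` is Hausdorff -/
  t2₀ : T2Space ↥X₀
  /-- (PCS2): `X₀` is zero-dimensional -/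
  zdim₀ : IsTopologicalBasis {s : Set ↥X₀ | IsClopen s}
  /-- (PCS2): `R` is a closed relation on `X₀` -/
  closedR : IsClosed {p : ↥X₀ × ↥X₀ | R p.1 p.2}
  /-- (PCS3): `RC(X,X₀)` is a closed base for `X` -/
  base : ∀ U : Set X, IsOpen U → ∀ x ∈ U,
    ∃ A : Clopens ↥X₀, x ∈ (embCl X₀ A)ᶜ ∧ (embCl X₀ A)ᶜ ⊆ U
  /-- (PCS4) -/
  pcs4 : ∀ A B : Clopens ↥X₀, (embCl X₀ A ∩ embCl X₀ B).Nonempty →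
    CSharp (clopCR R) A B
  /-- (PCS5): every clan of `(CO(X₀), C_R)` is of the form `Γ_{x,X₀}` -/
  pcs5 : ∀ Γ : Set (Clopens ↥X₀), IsClan (clopCR R) Γ →
    ∃ x : X, Γ = {A : Clopens ↥X₀ | x ∈ embCl X₀ A}

theorem stmt10 {X : Type*} [TopologicalSpace X] {X₀ : Set X}
    {R : ↥X₀ → ↥X₀ → Prop} (h : TwoPrecontact X X₀ R) :
    CompactSpace X := by
  rw [← isCompact_univ_iff, isCompact_iff_ultrafilter_le_nhds]
  intro F _
  set Γ : Set (Clopens ↥X₀) := {A | embCl X₀ A ∈ F} with hΓ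
  have hclan : IsClan (clopCR R) Γ := by
    refine ⟨⟨⊤, ?_⟩, ?_, ?_, ?_, ?_⟩
    · show embCl X₀ ⊤ ∈ F
      have : embCl X₀ ⊤ = Set.univ := by
        have : (Subtype.val '' ((⊤ : Clopens ↥X₀) : Set ↥X₀)) = X₀ := by
          simp [Subtype.range_coe]
        rw [embCl, this, h.dense.closure_eq]
      rw [this]; exact Filter.univ_mem
    · show embCl X₀ ⊥ ∉ F
      have : embCl X₀ ⊥ = ∅ := by simp [embCl]
      rw [this]; exact F.1.empty_notMem
    · intro a ha b hab
      exact F.1.mem_of_superset ha (closure_mono (Set.image_mono hab))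
    · intro a b hab
      have : embCl X₀ (a ⊔ b) = embCl X₀ a ∪ embCl X₀ b := by
        rw [embCl, embCl, embCl, ← closure_union, ← Set.image_union]
        rfl
      have := hab
      rw [hΓ] at this
      simp only [Set.mem_setOf_eq] at this ⊢
      rw [‹embCl X₀ (a ⊔ b) = _›] at this
      exact Ultrafilter.union_mem_iff.mp this
    · intro a ha b hb
      apply h.pcs4
      exact Filter.nonempty_of_mem (F.1.inter_mem ha hb)
  obtain ⟨x, hx⟩ := h.pcs5 Γ hclan
  refine ⟨x, Set.mem_univ x, ?_⟩
  intro U hU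
  rcases mem_nhds_iff.mp hU with ⟨V, hVU, hVopen, hxV⟩
  obtain ⟨A, hxA, hAV⟩ := h.base V hVopen x hxV
  have hA : A ∉ Γ := by rw [hx]; exact hxA
  have : embCl X₀ A ∉ F := hA
  have : (embCl X₀ A)ᶜ ∈ F := Ultrafilter.compl_mem_iff_notMem.mpr this
  exact F.1.mem_of_superset this (hAV.trans hVU)
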